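/- Let G be a finite abelian group, H ≤ G a subgroup such that G/H is cyclic of order n generated by the image of an element g ∈ G. Let χ : H → ℂˣ be a character of H. Then, in the polynomial ring ℂ[T], ∏_{ψ} (1 - ψ(g)·T) = 1 - χ(g^n)·T^n, where the product runs over all characters ψ of G whose restriction to H equals χ. -/

import Mathlib

open Polynomial

/-- Product of `(1 - w·X)` over the `n`-th roots of a nonzero `c : ℂ` equals `1 - c·Xⁿ`. -/
private lemma prod_one_sub_root_mul_X {n : ℕ} (hn : n ≠ 0) {c : ℂ} (hc : c ≠ 0) :
    (∏ w ∈ (Polynomial.nthRoots n c).toFinset, (1 - Polynomial.C w * Polynomial.X))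
      = 1 - Polynomial.C c * Polynomial.X ^ n := by
  set p : Polynomial ℂ := Polynomial.X ^ n - Polynomial.C c with hp
  have hsep : p.Separable := Polynomial.separable_X_pow_sub_C c (by exact_mod_cast hn) hc
  have hnodup : p.roots.Nodup := Polynomial.nodup_roots hsep
  have hroots : Polynomial.nthRoots n c = p.roots := rfl
  have hval : (Polynomial.nthRoots n c).toFinset.val = p.roots := by
    rw [hroots, Multiset.toFinset_val, Multiset.dedup_eq_self.mpr hnodup]
  have hmonic : p.Monic := Polynomial.monic_X_pow_sub_C c hn
  have hsplit : Polynomial.Splits p := IsAlgClosed.splits p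
  have hcard : Multiset.card p.roots = n := by
    rw [(Polynomial.splits_iff_card_roots).mp hsplit, hp,
      Polynomial.natDegree_X_pow_sub_C]
  have hcardF : (Polynomial.nthRoots n c).toFinset.card = n := by
    rw [Finset.card_def, hval, hcard]
  have hprod : (∏ w ∈ (Polynomial.nthRoots n c).toFinset,
      (Polynomial.X - Polynomial.C w)) = p := by
    rw [Finset.prod_eq_multiset_prod, hval]
    exact (hsplit.eq_prod_roots_of_monic hmonic).symm
  apply Polynomial.funext
  intro t
  rcases eq_or_ne t 0 with rfl | ht
  · simp [Polynomial.eval_prod, hn]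
  · have h1 : Polynomial.eval t (∏ w ∈ (Polynomial.nthRoots n c).toFinset,
        (1 - Polynomial.C w * Polynomial.X))
        = ∏ w ∈ (Polynomial.nthRoots n c).toFinset, (1 - w * t) := by
      rw [Polynomial.eval_prod]; simp
    have h2 : ∏ w ∈ (Polynomial.nthRoots n c).toFinset, (1 - w * t)
        = t ^ n * ∏ w ∈ (Polynomial.nthRoots n c).toFinset, (t⁻¹ - w) := by
      calc ∏ w ∈ (Polynomial.nthRoots n c).toFinset, (1 - w * t)
          = ∏ w ∈ (Polynomial.nthRoots n c).toFinset, (t * (t⁻¹ - w)) :=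
            Finset.prod_congr rfl (fun w _ => by
              rw [mul_sub, mul_inv_cancel₀ ht]; ring)
        _ = t ^ (Polynomial.nthRoots n c).toFinset.card
              * ∏ w ∈ (Polynomial.nthRoots n c).toFinset, (t⁻¹ - w) := by
            rw [Finset.prod_mul_distrib, Finset.prod_const]
        _ = t ^ n * ∏ w ∈ (Polynomial.nthRoots n c).toFinset, (t⁻¹ - w) := by
            rw [hcardF]
    have h3 : (∏ w ∈ (Polynomial.nthRoots n c).toFinset, (t⁻¹ - w))
        = t⁻¹ ^ n - c := by
      have h := congrArg (Polynomial.eval t⁻¹) hprod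
      rw [Polynomial.eval_prod, hp] at h
      simpa using h
    rw [h1, h2, h3]
    simp only [Polynomial.eval_sub, Polynomial.eval_one, Polynomial.eval_mul,
      Polynomial.eval_C, Polynomial.eval_pow, Polynomial.eval_X,
      mul_sub, ← mul_pow, mul_inv_cancel₀ ht]
    ring
  
/-- If `g ^ k ∈ H` for `k : ℤ` and `z ^ n = χ (g ^ n)`, then `χ (g ^ k) = z ^ k`. -/
private lemma chi_zpow {G : Type*} [CommGroup G] (H : Subgroup G) (g : G) (n : ℕ)
    (hn : orderOf (QuotientGroup.mk g : G ⧸ H) = n)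
    (hgn : g ^ n ∈ H) (χ : H →* ℂˣ) (z : ℂˣ) (hz : z ^ n = χ ⟨g ^ n, hgn⟩)
    (k : ℤ) (hk : g ^ k ∈ H) : χ ⟨g ^ k, hk⟩ = z ^ k := by
  have h1 : ((QuotientGroup.mk g : G ⧸ H)) ^ k = 1 := by
    rw [← QuotientGroup.mk_zpow]
    exact (QuotientGroup.eq_one_iff _).mpr hk
  have h2 : (n : ℤ) ∣ k := by
    rw [← hn]; exact orderOf_dvd_iff_zpow_eq_one.mpr h1
  obtain ⟨m, rfl⟩ := h2
  have h3 : (⟨g ^ ((n : ℤ) * m), hk⟩ : H) = (⟨g ^ n, hgn⟩ : H) ^ m := by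
    ext
    push_cast
    rw [zpow_mul, zpow_natCast]
  rw [h3, map_zpow, ← hz, zpow_mul, zpow_natCast]

/-- Existence of an extension of `χ` to `G` with prescribed value at `g`. -/
private lemma exists_ext {G : Type*} [CommGroup G] (H : Subgroup G) (g : G) (n : ℕ)
    (hn : orderOf (QuotientGroup.mk g : G ⧸ H) = n)
    (hgn : g ^ n ∈ H) (χ : H →* ℂˣ)
    (hgen : ∀ x : G ⧸ H, x ∈ Subgroup.zpowers (QuotientGroup.mk g : G ⧸ H))
    (z : ℂˣ) (hz : z ^ n = χ ⟨g ^ n, hgn⟩) :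
    ∃ ψ : G →* ℂˣ, ψ.comp H.subtype = χ ∧ ψ g = z := by
  classical
  have hex : ∀ x : G, ∃ k : ℤ, g ^ (-k) * x ∈ H := by
    intro x
    obtain ⟨k, hk⟩ := Subgroup.mem_zpowers_iff.mp (hgen (QuotientGroup.mk x))
    refine ⟨k, ?_⟩
    rw [← QuotientGroup.mk_zpow] at hk
    have h := QuotientGroup.eq.mp hk
    rwa [← zpow_neg] at h
  choose k hmem using hex
  set f : G → ℂˣ := fun x => z ^ (k x) * χ ⟨g ^ (-(k x)) * x, hmem x⟩ with hf
  have indep : ∀ (j : ℤ) (x : G) (h : g ^ (-j) * x ∈ H),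
      f x = z ^ j * χ ⟨g ^ (-j) * x, h⟩ := by
    intro j x h
    have key : g ^ (k x - j) * (g ^ (-(k x)) * x) = g ^ (-j) * x := by
      rw [← mul_assoc, ← zpow_add]
      have : k x - j + -(k x) = -j := by ring
      rw [this]
    have hd : g ^ (k x - j) ∈ H :=
      (Subgroup.mul_mem_cancel_right H (hmem x)).mp (by rw [key]; exact h)
    have hsplit : (⟨g ^ (-j) * x, h⟩ : H)
        = (⟨g ^ (k x - j), hd⟩ : H) * ⟨g ^ (-(k x)) * x, hmem x⟩ := by
      ext
      exact key.symm
    rw [hsplit, map_mul, chi_zpow H g n hn hgn χ z hz]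
    simp only [hf]
    rw [← mul_assoc, ← zpow_add]
    have : j + (k x - j) = k x := by ring
    rw [this]
  have hmul : ∀ x y : G, f (x * y) = f x * f y := by
    intro x y
    have key : g ^ (-(k x + k y)) * (x * y)
        = (g ^ (-(k x)) * x) * (g ^ (-(k y)) * y) := by
      rw [neg_add, zpow_add]
      exact mul_mul_mul_comm _ _ _ _
    have h : g ^ (-(k x + k y)) * (x * y) ∈ H := by
      rw [key]; exact H.mul_mem (hmem x) (hmem y)
    rw [indep (k x + k y) (x * y) h]
    have hsplit : (⟨g ^ (-(k x + k y)) * (x * y), h⟩ : H)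
        = (⟨g ^ (-(k x)) * x, hmem x⟩ : H) * ⟨g ^ (-(k y)) * y, hmem y⟩ := by
      ext
      exact key
    rw [hsplit, map_mul]
    simp only [hf]
    rw [zpow_add, mul_mul_mul_comm]
  refine ⟨MonoidHom.mk' f hmul, ?_, ?_⟩
  · ext x
    simp only [MonoidHom.comp_apply, MonoidHom.mk'_apply, Subgroup.coe_subtype]
    rw [indep 0 (x : G) (by simpa using x.2)]
    have h0 : (⟨g ^ (-(0 : ℤ)) * (x : G), by simpa using x.2⟩ : H) = x := by
      ext; simp
    rw [h0]
    simp
  · show f g = z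
    rw [indep 1 g (by simp [H.one_mem])]
    have h1 : (⟨g ^ (-(1 : ℤ)) * g, by simp [H.one_mem]⟩ : H) = 1 := by
      ext; simp
    rw [h1]
    simp

/-- Uniqueness: two extensions of `χ` agreeing at `g` are equal. -/
private lemma ext_unique {G : Type*} [CommGroup G] (H : Subgroup G) (g : G) (χ : H →* ℂˣ)
    (hgen : ∀ x : G ⧸ H, x ∈ Subgroup.zpowers (QuotientGroup.mk g : G ⧸ H))
    (ψ₁ ψ₂ : G →* ℂˣ) (h1 : ψ₁.comp H.subtype = χ) (h2 : ψ₂.comp H.subtype = χ)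
    (hg : ψ₁ g = ψ₂ g) : ψ₁ = ψ₂ := by
  ext x
  obtain ⟨k, hk⟩ := Subgroup.mem_zpowers_iff.mp (hgen (QuotientGroup.mk x))
  rw [← QuotientGroup.mk_zpow] at hk
  have hmem : g ^ (-k) * x ∈ H := by
    have h := QuotientGroup.eq.mp hk
    rwa [← zpow_neg] at h
  have e : x = g ^ k * (g ^ (-k) * x) := by
    rw [← mul_assoc, ← zpow_add]
    simp
  have key : ∀ ψ : G →* ℂˣ, ψ.comp H.subtype = χ →
      ψ x = ψ g ^ k * χ ⟨g ^ (-k) * x, hmem⟩ := by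
    intro ψ h
    conv_lhs => rw [e]
    rw [map_mul, map_zpow]
    congr 1
    rw [← h]
    rfl
  rw [key ψ₁ h1, key ψ₂ h2, hg]

theorem stmt_3 {G : Type*} [CommGroup G] [Fintype G] (H : Subgroup G) (g : G) (n : ℕ)
    (hn : orderOf (QuotientGroup.mk g : G ⧸ H) = n)
    (hgen : ∀ x : G ⧸ H, x ∈ Subgroup.zpowers (QuotientGroup.mk g : G ⧸ H))
    (hgn : g ^ n ∈ H) (χ : H →* ℂˣ) :
    (∏ᶠ (ψ : G →* ℂˣ) (_ : ψ.comp H.subtype = χ),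
        (1 - Polynomial.C ((ψ g : ℂˣ) : ℂ) * Polynomial.X))
      = 1 - Polynomial.C ((χ ⟨g ^ n, hgn⟩ : ℂˣ) : ℂ) * Polynomial.X ^ n := by
  classical
  set c : ℂˣ := χ ⟨g ^ n, hgn⟩ with hc
  have hn0 : n ≠ 0 := by
    rw [← hn]
    exact (orderOf_pos _).ne'
  set S : Set (G →* ℂˣ) := {ψ | ψ.comp H.subtype = χ} with hS
  have hinj : Set.InjOn (fun ψ : G →* ℂˣ => ((ψ g : ℂˣ) : ℂ)) S := by
    intro ψ₁ h1 ψ₂ h2 h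
    exact ext_unique H g χ hgen ψ₁ ψ₂ h1 h2 (Units.ext h)
  have himg : (fun ψ : G →* ℂˣ => ((ψ g : ℂˣ) : ℂ)) '' S
      = ↑((Polynomial.nthRoots n ((c : ℂˣ) : ℂ)).toFinset) := by
    ext w
    simp only [Set.mem_image, Finset.coe_sort_coe, Finset.mem_coe,
      Multiset.mem_toFinset, Polynomial.mem_nthRoots (Nat.pos_of_ne_zero hn0)]
    constructor
    · rintro ⟨ψ, hψ, rfl⟩
      have h : ψ g ^ n = c := by
        rw [hc, ← hψ, ← map_pow]
        rfl
      exact_mod_cast congrArg Units.val h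
    · intro hw
      have hw0 : w ≠ 0 := by
        intro h0
        rw [h0, zero_pow hn0] at hw
        exact (c : ℂˣ).ne_zero hw.symm
      obtain ⟨ψ, hψ, hψg⟩ := exists_ext H g n hn hgn χ hgen (Units.mk0 w hw0)
        (Units.ext (by simpa using hw))
      exact ⟨ψ, hψ, by rw [hψg]; rfl⟩
  calc (∏ᶠ (ψ : G →* ℂˣ) (_ : ψ.comp H.subtype = χ),
        (1 - Polynomial.C ((ψ g : ℂˣ) : ℂ) * Polynomial.X))
      = ∏ᶠ (ψ : G →* ℂˣ) (_ : ψ ∈ S),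
        (1 - Polynomial.C ((ψ g : ℂˣ) : ℂ) * Polynomial.X) := rfl
    _ = ∏ᶠ (w : ℂ) (_ : w ∈ (fun ψ : G →* ℂˣ => ((ψ g : ℂˣ) : ℂ)) '' S),
        (1 - Polynomial.C w * Polynomial.X) := (finprod_mem_image (f := fun w : ℂ => 1 - Polynomial.C w * Polynomial.X) hinj).symm
    _ = ∏ᶠ (w : ℂ) (_ : w ∈ (((Polynomial.nthRoots n ((c : ℂˣ) : ℂ)).toFinset
          : Finset ℂ) : Set ℂ)),
        (1 - Polynomial.C w * Polynomial.X) := by rw [himg]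
    _ = ∏ w ∈ (Polynomial.nthRoots n ((c : ℂˣ) : ℂ)).toFinset,
        (1 - Polynomial.C w * Polynomial.X) := finprod_mem_coe_finset _ _
    _ = 1 - Polynomial.C ((c : ℂˣ) : ℂ) * Polynomial.X ^ n :=
        prod_one_sub_root_mul_X hn0 (c : ℂˣ).ne_zero
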